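/- arXiv:cs/0106028 — 3 statements merged into one kernel-verified Lean document; each statement's English description precedes it below -/
import Mathlib

section
/- Let r ∈ ℝ, σ > 0, T > 0, S₀ > 0, K > 0, and let γ be the standard Gaussian measure on ℝ. Write S(x) = S₀·exp((r − σ²/2)·T + σ·√T·x) and d₁ = (log(S₀/K) + (r − σ²/2)·T)/(σ·√T). Then ∫ S(x)·1_{S(x) > K} dγ(x) = S₀·exp(r·T)·Φ(d₁ + σ·√T), where Φ is the cumulative distribution function of the standard Gaussian measure. -/
open MeasureTheory ProbabilityTheory

/-- The cumulative distribution function of the standard Gaussian measure. -/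
noncomputable def stdNormalCDF (y : ℝ) : ℝ :=
  ((gaussianReal 0 1) (Set.Iic y)).toReal

lemma gaussian_Ioi_neg (c : ℝ) :
    (gaussianReal 0 1) (Set.Ioi (-c)) = (gaussianReal 0 1) (Set.Iic c) := by
  have hm : (gaussianReal 0 1).map (fun x => (-1 : ℝ) * x) =
      gaussianReal ((-1) * 0) (⟨(-1:ℝ)^2, sq_nonneg _⟩ * 1) :=
    gaussianReal_map_const_mul (-1)
  have hv : (⟨(-1:ℝ)^2, sq_nonneg _⟩ : NNReal) * 1 = 1 := by ext; norm_num
  replace hm := hm.trans (congrArg _ hv)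
  simp only [neg_one_mul, neg_zero] at hm
  have h1 : (gaussianReal 0 1) (Set.Ioi (-c)) =
      ((gaussianReal 0 1).map (fun x : ℝ => -x)) (Set.Ioi (-c)) := by rw [hm]; rfl
  rw [h1, Measure.map_apply measurable_neg measurableSet_Ioi]
  have hpre : (fun x : ℝ => -x) ⁻¹' Set.Ioi (-c) = Set.Iio c := by
    ext x; simp [neg_lt]
  rw [hpre]
  have hsing : (gaussianReal 0 1) {c} = 0 :=
    gaussianReal_absolutelyContinuous 0 one_ne_zero (measure_singleton c)
  rw [← Set.Iio_union_right, measure_union (by simp) (measurableSet_singleton c), hsing, add_zero]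

theorem expectation_in_the_money
    (r σ T S₀ K : ℝ) (hσ : 0 < σ) (hT : 0 < T) (hS₀ : 0 < S₀) (hK : 0 < K)
    (S : ℝ → ℝ)
    (hS : ∀ x, S x = S₀ * Real.exp ((r - σ ^ 2 / 2) * T + σ * Real.sqrt T * x))
    (d₁ : ℝ)
    (hd₁ : d₁ = (Real.log (S₀ / K) + (r - σ ^ 2 / 2) * T) / (σ * Real.sqrt T)) :
    ∫ x, S x * (if K < S x then (1 : ℝ) else 0) ∂(gaussianReal 0 1) =
      S₀ * Real.exp (r * T) * stdNormalCDF (d₁ + σ * Real.sqrt T) := by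
  set b : ℝ := σ * Real.sqrt T with hb_def
  have hb : 0 < b := mul_pos hσ (Real.sqrt_pos.mpr hT)
  have hb2 : b ^ 2 = σ ^ 2 * T := by
    rw [hb_def, mul_pow, Real.sq_sqrt hT.le]
  set a : ℝ := (r - σ ^ 2 / 2) * T with ha_def
  -- condition equivalence
  have hcond : ∀ x : ℝ, K < S x ↔ -d₁ < x := by
    intro x
    rw [hS x]
    have key : S₀ * Real.exp (a + b * x) = Real.exp (Real.log S₀ + (a + b * x)) := by
      rw [Real.exp_add (Real.log S₀) (a + b * x), Real.exp_log hS₀]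
    rw [key, ← Real.exp_log hK, Real.exp_lt_exp, hd₁, Real.log_div hS₀.ne' hK.ne',
      ← neg_div, div_lt_iff₀ hb]
    constructor <;> intro h <;> nlinarith
  -- pointwise identity
  have hpt : ∀ x : ℝ,
      gaussianPDFReal 0 1 x * (S x * (if K < S x then (1:ℝ) else 0)) =
      S₀ * Real.exp (r * T) * Set.indicator (Set.Ioi (-d₁)) (gaussianPDFReal b 1) x := by
    intro x
    rw [Set.indicator_apply]
    simp only [Set.mem_Ioi]
    by_cases h : K < S x
    · rw [if_pos h, if_pos ((hcond x).mp h), mul_one, hS x]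
      simp only [gaussianPDFReal, NNReal.coe_one, mul_one, sub_zero]
      have harg : -x ^ 2 / 2 + (a + b * x) = r * T + -(x - b) ^ 2 / 2 := by
        rw [ha_def]; linear_combination hb2 / 2
      have : Real.exp (-x ^ 2 / 2) * (S₀ * Real.exp (a + b * x)) =
          S₀ * Real.exp (r * T) * Real.exp (-(x - b) ^ 2 / 2) := by
        calc Real.exp (-x ^ 2 / 2) * (S₀ * Real.exp (a + b * x))
            = S₀ * Real.exp (-x ^ 2 / 2 + (a + b * x)) := by rw [Real.exp_add (-x ^ 2 / 2) (a + b * x)]; ring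
          _ = S₀ * Real.exp (r * T + -(x - b) ^ 2 / 2) := by rw [harg]
          _ = S₀ * Real.exp (r * T) * Real.exp (-(x - b) ^ 2 / 2) := by
              rw [Real.exp_add (r * T) (-(x - b) ^ 2 / 2)]; ring
      calc (Real.sqrt (2 * Real.pi))⁻¹ * Real.exp (-x ^ 2 / 2) * (S₀ * Real.exp (a + b * x))
          = (Real.sqrt (2 * Real.pi))⁻¹ * (Real.exp (-x ^ 2 / 2) * (S₀ * Real.exp (a + b * x))) := by
            ring
        _ = (Real.sqrt (2 * Real.pi))⁻¹ * (S₀ * Real.exp (r * T) * Real.exp (-(x - b) ^ 2 / 2)) := by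
            rw [this]
        _ = S₀ * Real.exp (r * T) * ((Real.sqrt (2 * Real.pi))⁻¹ * Real.exp (-(x - b) ^ 2 / 2)) := by
            ring
    · rw [if_neg h, if_neg (fun hx => h ((hcond x).mpr hx)), mul_zero, mul_zero, mul_zero]
  -- rewrite the gaussian integral as a Lebesgue integral
  have hmeas : Measurable fun x : ℝ => (gaussianPDFReal 0 1 x).toNNReal :=
    (measurable_gaussianPDFReal 0 1).real_toNNReal
  have hw : gaussianReal 0 1 = volume.withDensity (fun x => ((gaussianPDFReal 0 1 x).toNNReal : ENNReal)) := by
    rw [gaussianReal_of_var_ne_zero 0 one_ne_zero]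
    rfl
  rw [hw, integral_withDensity_eq_integral_smul hmeas]
  have : ∀ x : ℝ, ((gaussianPDFReal 0 1 x).toNNReal : NNReal) • (S x * (if K < S x then (1:ℝ) else 0))
      = S₀ * Real.exp (r * T) * Set.indicator (Set.Ioi (-d₁)) (gaussianPDFReal b 1) x := by
    intro x
    rw [NNReal.smul_def, smul_eq_mul, Real.coe_toNNReal _ (gaussianPDFReal_nonneg 0 1 x)]
    exact hpt x
  rw [integral_congr_ae (ae_of_all _ this), integral_const_mul,
    integral_indicator measurableSet_Ioi]
  -- identify the set integral with a gaussian measure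
  have hval : ∫ x in Set.Ioi (-d₁), gaussianPDFReal b 1 x
      = ((gaussianReal b 1) (Set.Ioi (-d₁))).toReal := by
    rw [gaussianReal_apply_eq_integral b one_ne_zero, ENNReal.toReal_ofReal
      (setIntegral_nonneg measurableSet_Ioi fun x _ => gaussianPDFReal_nonneg b 1 x)]
  rw [hval]
  -- translate
  have hmap : (gaussianReal 0 1).map (· + b) = gaussianReal b 1 := by
    rw [gaussianReal_map_add_const b, zero_add]
  have htrans : (gaussianReal b 1) (Set.Ioi (-d₁)) = (gaussianReal 0 1) (Set.Ioi (-(d₁ + b))) := by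
    rw [← hmap, Measure.map_apply (measurable_add_const b) measurableSet_Ioi]
    congr 1
    ext x
    simp only [Set.mem_preimage, Set.mem_Ioi]
    constructor <;> intro h <;> linarith
  rw [htrans, gaussian_Ioi_neg, stdNormalCDF]
end

section
/- Let r ∈ ℝ, σ > 0, T > 0, S₀ > 0, K > 0, and let γ be the standard Gaussian measure on ℝ. Write S(x) = S₀·exp((r − σ²/2)·T + σ·√T·x) and d₁ = (log(S₀/K) + (r − σ²/2)·T)/(σ·√T). Then the value of a European call option with strike K and maturity T satisfies exp(−r·T)·∫ max(S(x) − K, 0) dγ(x) = S₀·Φ(d₁ + σ·√T) − K·exp(−r·T)·Φ(d₁), where Φ is the cumulative distribution function of the standard Gaussian measure. (Black–Scholes call price formula.) -/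
open MeasureTheory ProbabilityTheory

lemma setIntegral_gaussianReal_aux (m : ℝ) {s : Set ℝ} (hs : MeasurableSet s) (f : ℝ → ℝ) :
    ∫ x in s, f x ∂(gaussianReal m 1) = ∫ x in s, gaussianPDFReal m 1 x * f x := by
  rw [gaussianReal_of_var_ne_zero _ one_ne_zero, gaussianPDF_def,
    MeasureTheory.restrict_withDensity hs]
  have h : (fun x => ENNReal.ofReal (gaussianPDFReal m 1 x)) =
      fun x => ((Real.toNNReal (gaussianPDFReal m 1 x) : NNReal) : ENNReal) := rfl
  rw [h, integral_withDensity_eq_integral_smul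
    ((measurable_gaussianPDFReal m 1).real_toNNReal) f]
  congr 1
  ext x
  rw [NNReal.smul_def, smul_eq_mul, Real.coe_toNNReal _ (gaussianPDFReal_nonneg _ _ _)]

lemma gaussianReal_toReal_aux (m : ℝ) (s : Set ℝ) :
    ((gaussianReal m 1) s).toReal = ∫ x in s, gaussianPDFReal m 1 x := by
  rw [gaussianReal_apply_eq_integral _ one_ne_zero,
    ENNReal.toReal_ofReal (integral_nonneg fun x => gaussianPDFReal_nonneg _ _ _)]

lemma gaussianReal_Ici_aux (m c : ℝ) :
    ((gaussianReal m 1) (Set.Ici c)).toReal = stdNormalCDF (m - c) := by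
  have h1 : gaussianReal m 1 = (gaussianReal 0 1).map (· + m) := by
    rw [gaussianReal_map_add_const, zero_add]
  rw [h1, Measure.map_apply (measurable_add_const m) measurableSet_Ici]
  have h2 : (· + m) ⁻¹' (Set.Ici c) = Set.Ici (c - m) := by
    ext x; simp [Set.mem_Ici, sub_le_iff_le_add]
  rw [h2]
  have h3 : gaussianReal 0 1 = (gaussianReal 0 1).map (fun x => (-1 : ℝ) * x) := by
    have hv : (⟨(-1:ℝ)^2, sq_nonneg _⟩ * 1 : NNReal) = 1 := by
      exact (mul_one _).trans (NNReal.eq (by norm_num; rfl))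
    rw [gaussianReal_map_const_mul, mul_zero]; congr 1; ext; simp
  rw [h3, Measure.map_apply (measurable_const_mul _) measurableSet_Ici]
  have h4 : (fun x => (-1 : ℝ) * x) ⁻¹' Set.Ici (c - m) = Set.Iic (m - c) := by
    ext x
    simp only [Set.mem_preimage, Set.mem_Ici, Set.mem_Iic, neg_one_mul]
    constructor
    · intro h; linarith
    · intro h; linarith
  rw [h4]
  rfl

theorem black_scholes_call_price
    (r σ T S₀ K : ℝ) (hσ : 0 < σ) (hT : 0 < T) (hS₀ : 0 < S₀) (hK : 0 < K)
    (S : ℝ → ℝ)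
    (hS : ∀ x, S x = S₀ * Real.exp ((r - σ ^ 2 / 2) * T + σ * Real.sqrt T * x))
    (d₁ : ℝ)
    (hd₁ : d₁ = (Real.log (S₀ / K) + (r - σ ^ 2 / 2) * T) / (σ * Real.sqrt T)) :
    Real.exp (-r * T) * ∫ x, max (S x - K) 0 ∂(gaussianReal 0 1) =
      S₀ * stdNormalCDF (d₁ + σ * Real.sqrt T) -
        K * Real.exp (-r * T) * stdNormalCDF d₁ := by
  have hb : 0 < σ * Real.sqrt T := mul_pos hσ (Real.sqrt_pos.mpr hT)
  set b := σ * Real.sqrt T with hbdef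
  set a := (r - σ ^ 2 / 2) * T with hadef
  set c := -d₁ with hcdef
  -- key: K = S₀ * exp (a + b * c)
  have habc : a + b * c = Real.log (K / S₀) := by
    rw [hcdef, hd₁, Real.log_div hK.ne' hS₀.ne', Real.log_div hS₀.ne' hK.ne']
    field_simp
    ring
  have hKval : K = S₀ * Real.exp (a + b * c) := by
    rw [habc, Real.exp_log (div_pos hK hS₀)]
    field_simp
  have key : ∀ x : ℝ, c ≤ x ↔ K ≤ S x := by
    intro x
    rw [hS x, hKval]
    rw [mul_le_mul_iff_right₀ hS₀, Real.exp_le_exp, add_le_add_iff_left, mul_le_mul_iff_right₀ hb]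
  -- the max is an indicator
  have h1 : ∫ x, max (S x - K) 0 ∂(gaussianReal 0 1)
      = ∫ x in Set.Ici c, (S x - K) ∂(gaussianReal 0 1) := by
    rw [← integral_indicator measurableSet_Ici]
    congr 1
    ext x
    rw [Set.indicator_apply]
    by_cases hx : x ∈ Set.Ici c
    · rw [if_pos hx, max_eq_left (sub_nonneg.mpr ((key x).mp hx))]
    · rw [if_neg hx,
        max_eq_right (sub_nonpos.mpr (le_of_not_ge (fun h => hx ((key x).mpr h))))]
  rw [h1, setIntegral_gaussianReal_aux 0 measurableSet_Ici]
  -- pointwise identity for the S part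
  have hC : S₀ * Real.exp (a + b ^ 2 / 2) = S₀ * Real.exp (r * T) := by
    congr 2
    rw [hbdef, hadef, mul_pow, Real.sq_sqrt hT.le]
    ring
  have hpt : (fun x => gaussianPDFReal 0 1 x * S x)
      = fun x => (S₀ * Real.exp (r * T)) * gaussianPDFReal b 1 x := by
    ext x
    rw [hS x, ← hC]
    simp only [gaussianPDFReal, NNReal.coe_one, mul_one, sub_zero]
    have hexp : Real.exp (-x ^ 2 / 2) * Real.exp (a + b * x)
        = Real.exp (a + b ^ 2 / 2) * Real.exp (-(x - b) ^ 2 / 2) := by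
      rw [← Real.exp_add, ← Real.exp_add]; congr 1; ring
    linear_combination (Real.sqrt (2 * Real.pi))⁻¹ * S₀ * hexp
  -- split the integral
  have hint1 : Integrable (fun x => gaussianPDFReal 0 1 x * S x) := by
    rw [hpt]; exact (integrable_gaussianPDFReal b 1).const_mul _
  have hint2 : Integrable (fun x => gaussianPDFReal 0 1 x * K) :=
    (integrable_gaussianPDFReal 0 1).mul_const K
  have hsplit : ∫ x in Set.Ici c, gaussianPDFReal 0 1 x * (S x - K)
      = (∫ x in Set.Ici c, gaussianPDFReal 0 1 x * S x)
        - ∫ x in Set.Ici c, gaussianPDFReal 0 1 x * K := by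
    rw [← integral_sub hint1.restrict hint2.restrict]
    congr 1; ext x; ring
  rw [hsplit, hpt]
  rw [integral_const_mul, integral_mul_const]
  rw [← gaussianReal_toReal_aux b (Set.Ici c), ← gaussianReal_toReal_aux 0 (Set.Ici c)]
  rw [gaussianReal_Ici_aux b c, gaussianReal_Ici_aux 0 c]
  have e1 : b - c = d₁ + σ * Real.sqrt T := by rw [hcdef, hbdef]; ring
  have e2 : (0 : ℝ) - c = d₁ := by rw [hcdef]; ring
  rw [e1, e2]
  have hexp : Real.exp (-r * T) * Real.exp (r * T) = 1 := by
    rw [← Real.exp_add]; norm_num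
  calc Real.exp (-r * T) * (S₀ * Real.exp (r * T) * stdNormalCDF (d₁ + σ * Real.sqrt T)
        - stdNormalCDF d₁ * K)
      = (Real.exp (-r * T) * Real.exp (r * T)) * S₀ * stdNormalCDF (d₁ + σ * Real.sqrt T)
        - K * Real.exp (-r * T) * stdNormalCDF d₁ := by ring
    _ = S₀ * stdNormalCDF (d₁ + σ * Real.sqrt T) - K * Real.exp (-r * T) * stdNormalCDF d₁ := by
        rw [hexp]; ring
end

section
/- Let N ∈ ℕ, r ∈ ℝ, T > 0, σ : Fin N → ℝ, S_{·,0} : Fin N → ℝ with S_{i,0} > 0 for all i, let m ∈ Fin N, and let P be an N×N real matrix whose m-th row has unit Euclidean norm, i.e. Σ_{j} (P_{mj})² = 1 (equivalently (P·Pᵀ)_{mm} = 1). Let γ^N be the standard Gaussian measure on ℝ^N and define Sᴿ_i(y) = S_{i,0}·exp((r − σ_i²/2)·T + σ_i·√T·(P·y)_i) for y ∈ ℝ^N. Then for every measurable g : (Fin N → ℝ) → ℝ that is nonnegative or such that both sides are integrable, ∫ Sᴿ_m(y)·g(Sᴿ(y)) dγ^N(y) = S_{m,0}·exp(r·T)·∫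 g( i ↦ exp(σ_i·σ_m·T·(P·Pᵀ)_{im})·Sᴿ_i(y) ) dγ^N(y). (Multidimensional elimination of the factor S_m from the expectation.) -/
open MeasureTheory ProbabilityTheory

/-- The standard Gaussian measure `γ^N` on `ℝ^N`, with density
`y ↦ (2π)^(−N/2)·exp(−‖y‖²/2)` w.r.t. Lebesgue measure. -/
noncomputable def stdGaussN (N : ℕ) : Measure (Fin N → ℝ) :=
  (volume : Measure (Fin N → ℝ)).withDensity fun y =>
    ENNReal.ofReal (((2 * Real.pi) ^ N) ^ (-(1 : ℝ) / 2) *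
      Real.exp (-(∑ i, y i ^ 2) / 2))

theorem multidim_elimination
    (N : ℕ) (r T : ℝ) (hT : 0 < T)
    (σ : Fin N → ℝ) (S₀ : Fin N → ℝ) (hS₀ : ∀ i, 0 < S₀ i)
    (m : Fin N) (P : Matrix (Fin N) (Fin N) ℝ)
    (hProw : ∑ j, (P m j) ^ 2 = 1)
    (SR : Fin N → (Fin N → ℝ) → ℝ)
    (hSR : ∀ i y, SR i y =
      S₀ i * Real.exp ((r - (σ i) ^ 2 / 2) * T + σ i * Real.sqrt T * Matrix.mulVec P y i))
    (g : (Fin N → ℝ) → ℝ) (hg : Measurable g)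
    (hgi : (∀ s, 0 ≤ g s) ∨
      (Integrable (fun y => SR m y * g (fun i => SR i y)) (stdGaussN N) ∧
        Integrable
          (fun y => g (fun i =>
            Real.exp (σ i * σ m * T * (P * P.transpose) i m) * SR i y))
          (stdGaussN N))) :
    ∫ y, SR m y * g (fun i => SR i y) ∂(stdGaussN N) =
      S₀ m * Real.exp (r * T) *
        ∫ y, g (fun i =>
          Real.exp (σ i * σ m * T * (P * P.transpose) i m) * SR i y) ∂(stdGaussN N) := by
  classical
  have hT' : Real.sqrt T * Real.sqrt T = T := Real.mul_self_sqrt hT.le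
  set K : ℝ := ((2 * Real.pi) ^ N) ^ (-(1 : ℝ) / 2) with hK
  have hKpos : 0 < K := Real.rpow_pos_of_pos (by positivity) _
  set d : (Fin N → ℝ) → ℝ := fun y => K * Real.exp (-(∑ i, y i ^ 2) / 2) with hd
  have hdpos : ∀ y, 0 < d y := fun y => mul_pos hKpos (Real.exp_pos _)
  have hdmeas : Measurable d := by
    apply Measurable.const_mul
    apply Real.measurable_exp.comp
    apply Measurable.div_const
    apply Measurable.neg
    exact Finset.measurable_sum _ (fun i _ => (measurable_pi_apply i).pow_const 2)
  set dnn : (Fin N → ℝ) → NNReal := fun y => Real.toNNReal (d y) with hdnn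
  have hmeas : Measurable dnn := hdmeas.real_toNNReal
  have hμ : stdGaussN N =
      (volume : Measure (Fin N → ℝ)).withDensity (fun y => ((dnn y : NNReal) : ENNReal)) := rfl
  set c : Fin N → ℝ := fun j => σ m * Real.sqrt T * P m j with hc
  -- (P c)_i
  have hPc : ∀ i, Matrix.mulVec P c i = σ m * Real.sqrt T * (P * P.transpose) i m := by
    intro i
    simp only [Matrix.mulVec, dotProduct, Matrix.mul_apply, Matrix.transpose_apply, hc,
      Finset.mul_sum]
    exact Finset.sum_congr rfl fun j _ => by ring
  -- shift lemma for SR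
  have hshift : ∀ i y, SR i (y + c) =
      Real.exp (σ i * σ m * T * (P * P.transpose) i m) * SR i y := by
    intro i y
    rw [hSR, hSR, Matrix.mulVec_add]
    have e : (r - σ i ^ 2 / 2) * T + σ i * Real.sqrt T *
          ((Matrix.mulVec P y + Matrix.mulVec P c) i) =
        σ i * σ m * T * (P * P.transpose) i m +
          ((r - σ i ^ 2 / 2) * T + σ i * Real.sqrt T * Matrix.mulVec P y i) := by
      have h := hPc i
      simp only [Pi.add_apply, h]
      linear_combination (σ i * σ m * ((P * P.transpose) i m)) * hT'
    rw [e, Real.exp_add]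
    ring
  -- ⟨c, y⟩ identity
  have hcy : ∀ y : Fin N → ℝ, σ m * Real.sqrt T * Matrix.mulVec P y m = ∑ j, c j * y j := by
    intro y
    simp only [Matrix.mulVec, dotProduct, hc, Finset.mul_sum]
    exact Finset.sum_congr rfl fun j _ => by ring
  have hc2 : ∑ j, c j ^ 2 = σ m ^ 2 * T := by
    have : ∀ j, c j ^ 2 = (σ m ^ 2 * T) * (P m j) ^ 2 := by
      intro j; simp only [hc]; nlinarith [hT']
    rw [Finset.sum_congr rfl fun j _ => this j, ← Finset.mul_sum, hProw, mul_one]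
  -- density shift
  have hB : ∀ y, d y * SR m y = S₀ m * Real.exp (r * T) * d (y - c) := by
    intro y
    rw [hSR]
    simp only [hd, Pi.sub_apply]
    have hsum : ∑ i, (y i - c i) ^ 2 = ∑ i, y i ^ 2 - 2 * (∑ j, c j * y j) + σ m ^ 2 * T := by
      have e : ∀ i, (y i - c i) ^ 2 = y i ^ 2 - 2 * (c i * y i) + c i ^ 2 := fun i => by ring
      rw [Finset.sum_congr rfl fun i _ => e i, Finset.sum_add_distrib, Finset.sum_sub_distrib,
        ← Finset.mul_sum, hc2]
    have hexp : -(∑ i, y i ^ 2) / 2 + ((r - σ m ^ 2 / 2) * T + σ m * Real.sqrt T * Matrix.mulVec P y m)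
        = r * T + (-(∑ i, (y i - c i) ^ 2) / 2) := by
      rw [hcy y, hsum]; ring
    have e1 : Real.exp (-(∑ i, y i ^ 2) / 2) *
          Real.exp ((r - σ m ^ 2 / 2) * T + σ m * Real.sqrt T * Matrix.mulVec P y m) =
        Real.exp (r * T) * Real.exp (-(∑ i, (y i - c i) ^ 2) / 2) := by
      rw [← Real.exp_add, ← Real.exp_add, hexp]
    calc K * Real.exp (-(∑ i, y i ^ 2) / 2) *
          (S₀ m * Real.exp ((r - σ m ^ 2 / 2) * T + σ m * Real.sqrt T * Matrix.mulVec P y m)) =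
        S₀ m * K * (Real.exp (-(∑ i, y i ^ 2) / 2) *
          Real.exp ((r - σ m ^ 2 / 2) * T + σ m * Real.sqrt T * Matrix.mulVec P y m)) := by ring
      _ = S₀ m * K * (Real.exp (r * T) * Real.exp (-(∑ i, (y i - c i) ^ 2) / 2)) := by rw [e1]
      _ = S₀ m * Real.exp (r * T) * (K * Real.exp (-(∑ i, (y i - c i) ^ 2) / 2)) := by ring
  -- now compute the integrals
  rw [hμ, integral_withDensity_eq_integral_smul hmeas, integral_withDensity_eq_integral_smul hmeas]
  have hsmul : ∀ (y : Fin N → ℝ) (x : ℝ), dnn y • x = d y * x := by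
    intro y x
    rw [NNReal.smul_def, hdnn]
    simp [Real.coe_toNNReal _ (hdpos y).le]
  simp only [hsmul]
  calc ∫ y, d y * (SR m y * g (fun i => SR i y)) ∂volume
      = ∫ y, S₀ m * Real.exp (r * T) * (d (y - c) * g (fun i => SR i y)) ∂volume := by
        refine integral_congr_ae (Filter.Eventually.of_forall fun y => ?_)
        dsimp only
        rw [← mul_assoc, hB y, mul_assoc]
    _ = S₀ m * Real.exp (r * T) * ∫ y, d (y - c) * g (fun i => SR i y) ∂volume :=
        integral_const_mul _ _
    _ = S₀ m * Real.exp (r * T) * ∫ y, d y *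
          g (fun i => Real.exp (σ i * σ m * T * (P * P.transpose) i m) * SR i y) ∂volume := by
        congr 1
        rw [← integral_add_right_eq_self (fun y => d (y - c) * g (fun i => SR i y)) c]
        refine integral_congr_ae (Filter.Eventually.of_forall fun y => ?_)
        simp only [add_sub_cancel_right]
        congr 1
        exact congrArg g (funext fun i => hshift i y)
end
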